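/- Replacing the chirp rate λ by 1/λ conjugates and time-reverses the Altes chirplet: writing U_λ for the chirplet with chirp rate λ, one has U_{1/λ}(ω) = conj(U_λ(ω)) for every ω ∈ ℝ; consequently, the time-domain chirplets u_λ(t) = (1/2π)∫_ℝ U_λ(ω)·e^{iωt} dω (which are well defined since U_λ is integrable) satisfy u_{1/λ}(t) = conj(u_λ(-t)) for every real t. -/

import Mathlib

open MeasureTheory

/-- The reparameterized Altes chirplet frequency response with chirp rate `lam`. -/
noncomputable def altes (κ ω₀ lam : ℝ) : ℝ → ℂ := fun ω =>
  if 0 < ω then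
    Complex.exp (-(↑(κ * (Real.log (ω / ω₀)) ^ 2) : ℂ)) *
      Complex.exp (2 * Real.pi * Complex.I * Real.log ω / Real.log lam)
  else 0

/-- The time-domain Altes chirplet u(t) = (1/2π)∫ U(ω)·e^{iωt} dω. -/
noncomputable def altesTime (κ ω₀ lam : ℝ) : ℝ → ℂ := fun t =>
  (↑(1 / (2 * Real.pi)) : ℂ) *
    ∫ ω : ℝ, altes κ ω₀ lam ω * Complex.exp (Complex.I * ω * t)

lemma altes_integrable (κ ω₀ lam : ℝ) (hκ : 0 < κ) (hω₀ : 0 < ω₀) :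
    Integrable (altes κ ω₀ lam) := by
  set a : ℝ := Real.log ω₀
  -- the real Gaussian-type bound
  have hgauss : Integrable (fun x : ℝ =>
      |Real.exp x| • Real.exp (-(κ * (Real.log (Real.exp x / ω₀)) ^ 2))) := by
    have h1 : Integrable (fun x : ℝ =>
        Real.exp (κ * ((a + 1 / (2 * κ)) ^ 2 - a ^ 2)) *
          Real.exp (-κ * (x - (a + 1 / (2 * κ))) ^ 2)) :=
      (((integrable_exp_neg_mul_sq hκ).comp_sub_right (a + 1 / (2 * κ))).const_mul _)
    refine h1.congr (Filter.Eventually.of_forall fun x => ?_)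
    dsimp only
    rw [Real.log_div (Real.exp_pos x).ne' hω₀.ne', Real.log_exp, ← Real.exp_add,
      abs_of_pos (Real.exp_pos x), smul_eq_mul, ← Real.exp_add]
    congr 1
    field_simp
    ring
  -- integrability of the norm function on Ioi 0
  have key : IntegrableOn (fun ω : ℝ => Real.exp (-(κ * (Real.log (ω / ω₀)) ^ 2))) (Set.Ioi 0) := by
    have himg : Real.exp '' Set.univ = Set.Ioi (0 : ℝ) := by
      rw [Set.image_univ, Real.range_exp]
    have := (integrableOn_image_iff_integrableOn_abs_deriv_smul (f := Real.exp)
      (f' := Real.exp) (s := Set.univ) MeasurableSet.univ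
      (fun x _ => (Real.hasDerivAt_exp x).hasDerivWithinAt)
      (Real.exp_injective.injOn)
      (fun ω : ℝ => Real.exp (-(κ * (Real.log (ω / ω₀)) ^ 2))))
    rw [himg] at this
    rw [this]
    simpa using hgauss
  -- altes is the indicator of Ioi 0 of a continuous-on function
  have heq : altes κ ω₀ lam = Set.indicator (Set.Ioi (0 : ℝ))
      (fun ω => Complex.exp (-(↑(κ * (Real.log (ω / ω₀)) ^ 2) : ℂ)) *
        Complex.exp (2 * Real.pi * Complex.I * Real.log ω / Real.log lam)) := by
    funext ω
    by_cases h : 0 < ω <;> simp [altes, Set.indicator, Set.mem_Ioi, h]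
  rw [heq, integrable_indicator_iff measurableSet_Ioi]
  have hmeas : AEStronglyMeasurable (fun ω : ℝ =>
      Complex.exp (-(↑(κ * (Real.log (ω / ω₀)) ^ 2) : ℂ)) *
        Complex.exp (2 * Real.pi * Complex.I * Real.log ω / Real.log lam))
      (volume.restrict (Set.Ioi 0)) := by
    refine (Measurable.aestronglyMeasurable ?_).restrict
    have hlog : Measurable Real.log := Real.measurable_log
    have h1 : Measurable (fun ω : ℝ =>
        Complex.exp (-(↑(κ * (Real.log (ω / ω₀)) ^ 2) : ℂ))) :=
      Complex.continuous_exp.measurable.comp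
        ((Complex.measurable_ofReal.comp
          (((hlog.comp (measurable_id.div_const ω₀)).pow_const 2).const_mul κ)).neg)
    have h2 : Measurable (fun ω : ℝ =>
        Complex.exp (2 * Real.pi * Complex.I * Real.log ω / Real.log lam)) :=
      Complex.continuous_exp.measurable.comp
        (((Complex.measurable_ofReal.comp hlog).const_mul
          (2 * Real.pi * Complex.I)).div_const _)
    exact h1.mul h2
  refine Integrable.mono' key hmeas ?_
  filter_upwards [ae_restrict_mem measurableSet_Ioi] with ω hω
  rw [norm_mul, Complex.norm_exp, Complex.norm_exp]
  have h1 : (-(↑(κ * (Real.log (ω / ω₀)) ^ 2) : ℂ)).re = -(κ * (Real.log (ω / ω₀)) ^ 2) := by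
    rw [Complex.neg_re, Complex.ofReal_re]
  have h2 : (2 * Real.pi * Complex.I * Real.log ω / Real.log lam).re = 0 := by
    have : (2 * Real.pi * Complex.I * Real.log ω / Real.log lam)
        = ((2 * Real.pi * Real.log ω / Real.log lam : ℝ) : ℂ) * Complex.I := by
      push_cast; ring
    rw [this]
    simp
  rw [h1, h2, Real.exp_zero, mul_one]

lemma altes_conj (κ ω₀ lam : ℝ) (hlam : 0 < lam) :
    ∀ ω : ℝ, altes κ ω₀ (1 / lam) ω = starRingEnd ℂ (altes κ ω₀ lam ω) := by
  intro ω
  unfold altes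
  by_cases h : 0 < ω
  · simp only [h, if_true, map_mul, ← Complex.exp_conj, map_neg, Complex.conj_ofReal, map_ofNat]
    congr 1
    rw [Real.log_div one_ne_zero hlam.ne', Real.log_one, zero_sub]
    rw [map_div₀, map_mul, map_mul]
    simp [Complex.conj_ofReal, div_neg, neg_div, map_ofNat]
  · simp [h]

theorem altes_reciprocal_chirp_rate (κ ω₀ lam : ℝ) (hκ : 0 < κ) (hω₀ : 0 < ω₀)
    (hlam : 0 < lam) (hlam1 : lam ≠ 1) :
    Integrable (altes κ ω₀ lam) ∧
    (∀ ω : ℝ, altes κ ω₀ (1 / lam) ω = starRingEnd ℂ (altes κ ω₀ lam ω)) ∧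
    (∀ t : ℝ, altesTime κ ω₀ (1 / lam) t =
      starRingEnd ℂ (altesTime κ ω₀ lam (-t))) := by
  refine ⟨altes_integrable κ ω₀ lam hκ hω₀, altes_conj κ ω₀ lam hlam, ?_⟩
  intro t
  unfold altesTime
  rw [map_mul, Complex.conj_ofReal, ← integral_conj]
  congr 1
  apply integral_congr_ae
  filter_upwards with ω
  rw [map_mul, ← altes_conj κ ω₀ lam hlam, ← Complex.exp_conj]
  congr 1
  rw [map_mul, map_mul, Complex.conj_I, Complex.conj_ofReal, Complex.conj_ofReal]
  push_cast
  ring
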